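/- Let X = {x_1,...,x_n} be a finite ordered set and F a family of subsets of X. Define F_{≤n} to be the collection of all projections S ∩ {x_1,...,x_i} for S ∈ F and 1 ≤ i ≤ n. Then there exists an assignment of positive integer weights w : X → {1, 2, ..., |F_{≤n}|²} such that all sets in F have pairwise distinct total weights. -/

import Mathlib

/-- The family of all projections `S ∩ {x_1,...,x_i}` for `S ∈ F`, `1 ≤ i ≤ n`,
with the ground set ordered as `Fin n`. -/
def projFamily {n : ℕ} (F : Finset (Finset (Fin n))) : Finset (Finset (Fin n)) :=
  F.biUnion fun S => (Finset.univ : Finset (Fin n)).image fun i => S.filter (· ≤ i)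

open Finset

private lemma mem_projFamily {n : ℕ} {F : Finset (Finset (Fin n))} {S : Finset (Fin n)}
    (hS : S ∈ F) (j : Fin n) : S.filter (· ≤ j) ∈ projFamily F := by
  simp only [projFamily, mem_biUnion, mem_image]
  exact ⟨S, hS, j, mem_univ j, rfl⟩

private lemma key {n : ℕ} (F : Finset (Finset (Fin n)))
    (hm : 2 ≤ (projFamily F).card) :
    ∀ i : ℕ, i ≤ n → ∃ w : Fin n → ℕ,
      (∀ x, w x ∈ Finset.Icc 1 ((projFamily F).card ^ 2)) ∧
      ∀ S₁ ∈ F, ∀ S₂ ∈ F,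
        ∑ x ∈ S₁.filter (fun x => x.val < i), w x
          = ∑ x ∈ S₂.filter (fun x => x.val < i), w x →
        S₁.filter (fun x => x.val < i) = S₂.filter (fun x => x.val < i) := by
  set m := (projFamily F).card with hmdef
  intro i
  induction i with
  | zero =>
    intro _
    refine ⟨fun _ => 1, fun x => ?_, fun S₁ _ S₂ _ _ => ?_⟩
    · simp only [mem_Icc]
      exact ⟨le_refl 1, Nat.one_le_pow _ _ (by omega)⟩
    · simp [Finset.filter_false_of_mem (fun (x : Fin n) _ => Nat.not_lt_zero x.val)]
  | succ i ih =>
    intro hin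
    obtain ⟨w, hw, hsep⟩ := ih (by omega)
    have hi : i < n := hin
    set xi : Fin n := ⟨i, hi⟩ with hxi
    set Qin : Finset (Finset (Fin n)) :=
      (F.filter (fun S => xi ∈ S)).image (fun S => S.filter (fun x => x.val < i)) with hQin
    set Qout : Finset (Finset (Fin n)) :=
      (F.filter (fun S => xi ∉ S)).image (fun S => S.filter (fun x => x.val < i)) with hQout
    -- element of Qin does not contain xi
    have hxiQin : ∀ A ∈ Qin, xi ∉ A := by
      intro A hA
      simp only [hQin, mem_image] at hA
      obtain ⟨S, _, rfl⟩ := hA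
      simp [mem_filter, hxi]
    have hxiQout : ∀ B ∈ Qout, xi ∉ B := by
      intro B hB
      simp only [hQout, mem_image] at hB
      obtain ⟨S, _, rfl⟩ := hB
      simp [mem_filter, hxi]
    -- the key counting bound
    have hcount : Qin.card * Qout.card < m ^ 2 := by
      rcases Nat.eq_zero_or_pos i with hi0 | hi0
      · -- i = 0 : both Qin and Qout are subsets of {∅}
        subst hi0
        have h1 : Qin.card ≤ 1 := by
          apply Finset.card_le_one.mpr
          intro a ha b hb
          simp only [hQin, mem_image] at ha hb
          obtain ⟨S, _, rfl⟩ := ha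
          obtain ⟨T, _, rfl⟩ := hb
          simp [Finset.filter_false_of_mem (fun (x : Fin n) _ => Nat.not_lt_zero x.val)]
        have h2 : Qout.card ≤ 1 := by
          apply Finset.card_le_one.mpr
          intro a ha b hb
          simp only [hQout, mem_image] at ha hb
          obtain ⟨S, _, rfl⟩ := ha
          obtain ⟨T, _, rfl⟩ := hb
          simp [Finset.filter_false_of_mem (fun (x : Fin n) _ => Nat.not_lt_zero x.val)]
        calc Qin.card * Qout.card ≤ 1 * 1 := Nat.mul_le_mul h1 h2
          _ < m ^ 2 := by nlinarith
      · -- i ≥ 1 : Qin.card + Qout.card ≤ m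
        have hij : i - 1 < n := by omega
        set xj : Fin n := ⟨i - 1, hij⟩ with hxj
        -- insert xi '' Qin ⊆ projFamily
        have hQin' : Qin.image (insert xi) ⊆ projFamily F := by
          intro A hA
          simp only [mem_image, hQin] at hA
          obtain ⟨A', hA', rfl⟩ := hA
          obtain ⟨S, hS, rfl⟩ := hA'
          simp only [mem_filter] at hS
          have : insert xi (S.filter (fun x => x.val < i)) = S.filter (· ≤ xi) := by
            ext y
            simp only [mem_insert, mem_filter]
            constructor
            · rintro (rfl | ⟨hy, hy'⟩)
              · exact ⟨hS.2, le_refl _⟩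
              · exact ⟨hy, le_of_lt hy'⟩
            · rintro ⟨hy, hy'⟩
              rcases lt_or_eq_of_le hy' with h | h
              · exact Or.inr ⟨hy, h⟩
              · exact Or.inl (by rw [h])
          rw [this]
          exact mem_projFamily hS.1 xi
        have hQout' : Qout ⊆ projFamily F := by
          intro B hB
          simp only [hQout, mem_image] at hB
          obtain ⟨S, hS, rfl⟩ := hB
          simp only [mem_filter] at hS
          have : S.filter (fun x => x.val < i) = S.filter (· ≤ xj) := by
            apply filter_congr
            intro y _
            simp only [Fin.le_def, hxj]
            constructor <;> intro h <;> omega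
          rw [this]
          exact mem_projFamily hS.1 xj
        have hdisj : Disjoint (Qin.image (insert xi)) Qout := by
          rw [Finset.disjoint_left]
          intro A hA hA'
          simp only [mem_image] at hA
          obtain ⟨A', _, rfl⟩ := hA
          exact hxiQout _ hA' (mem_insert_self _ _)
        have hcardim : (Qin.image (insert xi)).card = Qin.card := by
          apply Finset.card_image_of_injOn
          intro A hA B hB hAB
          have hA' := hxiQin A hA
          have hB' := hxiQin B hB
          have : (insert xi A).erase xi = (insert xi B).erase xi := by rw [hAB]
          rwa [Finset.erase_insert hA', Finset.erase_insert hB'] at this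
        have hsum : Qin.card + Qout.card ≤ m := by
          rw [← hcardim]
          calc (Qin.image (insert xi)).card + Qout.card
              = ((Qin.image (insert xi)) ∪ Qout).card := (card_union_of_disjoint hdisj).symm
            _ ≤ m := card_le_card (union_subset hQin' hQout')
        -- arithmetic: a + b ≤ m, m ≥ 2 → a * b < m ^ 2
        have ha : Qin.card ≤ m := by omega
        rcases Nat.eq_zero_or_pos Qin.card with h0 | h0
        · rw [h0, zero_mul]; positivity
        · have hb : Qout.card ≤ m - 1 := by omega
          calc Qin.card * Qout.card ≤ m * (m - 1) := Nat.mul_le_mul ha hb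
            _ < m * m := mul_lt_mul_of_pos_left (by omega) (by omega)
            _ = m ^ 2 := (sq m).symm
    -- choose c
    set Forbidden : Finset ℕ :=
      (Qout ×ˢ Qin).image (fun p => (∑ x ∈ p.1, w x) - (∑ x ∈ p.2, w x)) with hForb
    have hFcard : Forbidden.card < m ^ 2 := by
      calc Forbidden.card ≤ (Qout ×ˢ Qin).card := Finset.card_image_le
        _ = Qout.card * Qin.card := Finset.card_product _ _
        _ < m ^ 2 := by rw [Nat.mul_comm]; exact hcount
    have : ∃ c ∈ Finset.Icc 1 (m ^ 2), c ∉ Forbidden := by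
      by_contra h
      push_neg at h
      have hsub : Finset.Icc 1 (m ^ 2) ⊆ Forbidden := h
      have := Finset.card_le_card hsub
      rw [Nat.card_Icc] at this
      omega
    obtain ⟨c, hc, hcF⟩ := this
    set w' : Fin n → ℕ := Function.update w xi c with hw'
    have hagree : ∀ x : Fin n, x.val < i → w' x = w x := by
      intro x hx
      apply Function.update_of_ne
      intro h
      rw [h] at hx
      exact lt_irrefl i hx
    have hsumeq : ∀ S : Finset (Fin n),
        ∑ x ∈ S.filter (fun x => x.val < i), w' x
          = ∑ x ∈ S.filter (fun x => x.val < i), w x := by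
      intro S
      apply Finset.sum_congr rfl
      intro x hx
      simp only [mem_filter] at hx
      exact hagree x hx.2
    -- decomposition of the (i+1)-filter
    have hdecomp : ∀ S : Finset (Fin n),
        S.filter (fun x => x.val < i + 1)
          = (S.filter (fun x => x.val < i)) ∪ (S.filter (fun x => x = xi)) := by
      intro S
      rw [← Finset.filter_or]
      apply filter_congr
      intro y _
      simp only [Fin.ext_iff, hxi]
      constructor <;> intro h <;> omega
    have hdisj2 : ∀ S : Finset (Fin n),
        Disjoint (S.filter (fun x => x.val < i)) (S.filter (fun x => x = xi)) := by
      intro S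
      rw [Finset.disjoint_left]
      intro a ha ha'
      simp only [mem_filter] at ha ha'
      rw [ha'.2] at ha
      exact lt_irrefl i ha.2
    have hsplit : ∀ S : Finset (Fin n),
        ∑ x ∈ S.filter (fun x => x.val < i + 1), w' x
          = (∑ x ∈ S.filter (fun x => x.val < i), w x) + (if xi ∈ S then c else 0) := by
      intro S
      rw [hdecomp S, Finset.sum_union (hdisj2 S), hsumeq S]
      congr 1
      rw [Finset.filter_eq']
      by_cases h : xi ∈ S
      · simp [h, hw', Function.update_self]
      · simp [h]
    refine ⟨w', fun x => ?_, ?_⟩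
    · rw [hw']
      rcases eq_or_ne x xi with rfl | hx
      · rwa [Function.update_self]
      · rw [Function.update_of_ne hx]; exact hw x
    · intro S₁ hS₁ S₂ hS₂ heq
      rw [hsplit S₁, hsplit S₂] at heq
      rw [hdecomp S₁, hdecomp S₂]
      have hmemQin : ∀ S ∈ F, xi ∈ S → S.filter (fun x => x.val < i) ∈ Qin := by
        intro S hS hxS
        simp only [hQin, mem_image]
        exact ⟨S, mem_filter.mpr ⟨hS, hxS⟩, rfl⟩
      have hmemQout : ∀ S ∈ F, xi ∉ S → S.filter (fun x => x.val < i) ∈ Qout := by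
        intro S hS hxS
        simp only [hQout, mem_image]
        exact ⟨S, mem_filter.mpr ⟨hS, hxS⟩, rfl⟩
      by_cases h1 : xi ∈ S₁ <;> by_cases h2 : xi ∈ S₂
      · rw [if_pos h1, if_pos h2] at heq
        have := hsep S₁ hS₁ S₂ hS₂ (by omega)
        rw [this]
        congr 1
        rw [Finset.filter_eq', Finset.filter_eq', if_pos h1, if_pos h2]
      · -- xi ∈ S₁, xi ∉ S₂ : contradiction
        exfalso
        rw [if_pos h1, if_neg h2] at heq
        apply hcF
        rw [hForb]
        simp only [mem_image, mem_product]
        refine ⟨(S₂.filter (fun x => x.val < i), S₁.filter (fun x => x.val < i)),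
          ⟨hmemQout S₂ hS₂ h2, hmemQin S₁ hS₁ h1⟩, ?_⟩
        dsimp only
        have hc1 : 1 ≤ c := (Finset.mem_Icc.mp hc).1
        omega
      · exfalso
        rw [if_neg h1, if_pos h2] at heq
        apply hcF
        rw [hForb]
        simp only [mem_image, mem_product]
        refine ⟨(S₁.filter (fun x => x.val < i), S₂.filter (fun x => x.val < i)),
          ⟨hmemQout S₁ hS₁ h1, hmemQin S₂ hS₂ h2⟩, ?_⟩
        dsimp only
        have hc1 : 1 ≤ c := (Finset.mem_Icc.mp hc).1
        omega
      · rw [if_neg h1, if_neg h2] at heq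
        have := hsep S₁ hS₁ S₂ hS₂ (by omega)
        rw [this]
        congr 1
        rw [Finset.filter_eq', Finset.filter_eq', if_neg h1, if_neg h2]

/-- Alternate Deterministic Separation Lemma: weights can be chosen in
`{1,...,|F_{≤n}|²}` so that all sets of `F` have distinct total weights. -/
theorem alternate_deterministic_separation_lemma {n : ℕ}
    (F : Finset (Finset (Fin n))) (hF : F.Nonempty) :
    ∃ w : Fin n → ℕ,
      (∀ x : Fin n, w x ∈ Finset.Icc 1 ((projFamily F).card ^ 2)) ∧
      ∀ S₁ ∈ F, ∀ S₂ ∈ F, S₁ ≠ S₂ → ∑ x ∈ S₁, w x ≠ ∑ x ∈ S₂, w x := by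
  rcases Nat.eq_zero_or_pos n with hn | hn
  · subst hn
    refine ⟨fun _ => 1, fun x => x.elim0, fun S₁ _ S₂ _ h _ => ?_⟩
    exact h (by ext x; exact x.elim0)
  · -- n ≥ 1
    have hm1 : 1 ≤ (projFamily F).card := by
      obtain ⟨S, hS⟩ := hF
      exact Finset.card_pos.mpr ⟨S.filter (· ≤ ⟨0, hn⟩), mem_projFamily hS _⟩
    by_cases hF1 : F.card ≤ 1
    · refine ⟨fun _ => 1, fun x => ?_, fun S₁ hS₁ S₂ hS₂ h _ => ?_⟩
      · simp only [Finset.mem_Icc]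
        exact ⟨le_refl 1, Nat.one_le_pow _ _ (by omega)⟩
      · exact h (Finset.card_le_one.mp hF1 S₁ hS₁ S₂ hS₂)
    · push_neg at hF1
      have hFsub : F ⊆ projFamily F := by
        intro S hS
        have hj : n - 1 < n := by omega
        have : S = S.filter (· ≤ (⟨n - 1, hj⟩ : Fin n)) := by
          rw [Finset.filter_true_of_mem]
          intro x _
          simp only [Fin.le_def]
          omega
        rw [this]
        exact mem_projFamily hS _
      have hm2 : 2 ≤ (projFamily F).card :=
        le_trans hF1 (Finset.card_le_card hFsub)
      obtain ⟨w, hw, hsep⟩ := key F hm2 n (le_refl n)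
      refine ⟨w, hw, fun S₁ hS₁ S₂ hS₂ hne heq => ?_⟩
      have hfilt : ∀ S : Finset (Fin n), S.filter (fun x : Fin n => x.val < n) = S :=
        fun S => Finset.filter_true_of_mem (fun x _ => x.isLt)
      apply hne
      have := hsep S₁ hS₁ S₂ hS₂ (by rw [hfilt S₁, hfilt S₂]; exact heq)
      rwa [hfilt S₁, hfilt S₂] at this
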